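/- If X and Y are independent generalized Poisson random variables with parameters (θ₁, λ) and (θ₂, λ) respectively, then X + Y follows a generalized Poisson distribution with parameters (θ₁ + θ₂, λ). -/

import Mathlib

open MeasureTheory ProbabilityTheory

/-- The generalized Poisson pmf `GP(θ, λ)`:
`P(X = k) = θ (θ + kλ)^(k-1) e^{-θ-kλ} / k!`. -/
noncomputable def gpPmf (θ lam : ℝ) (k : ℕ) : ℝ :=
  θ * (θ + k * lam) ^ ((k : ℝ) - 1) / (Nat.factorial k) * Real.exp (-θ - k * lam)

/-- `X` follows a generalized Poisson distribution `GP(θ, λ)` under `P`. -/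
def HasGP {Ω : Type*} [MeasurableSpace Ω] (P : Measure Ω) (X : Ω → ℕ) (θ lam : ℝ) : Prop :=
  ∀ k : ℕ, P {ω | X ω = k} = ENNReal.ofReal (gpPmf θ lam k)

/- aux -/

noncomputable def abelP (z : ℝ) : ℕ → ℝ → ℝ
  | 0 => fun _ => 1
  | (n+1) => fun x => x * (x + (n+1) * z) ^ n

lemma abelP_zero (z x : ℝ) : abelP z 0 x = 1 := rfl

lemma abelP_succ (z : ℝ) (n : ℕ) (x : ℝ) :
    abelP z (n+1) x = x * (x + (n+1) * z) ^ n := rfl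

lemma abelP_zero_left (z : ℝ) (n : ℕ) (hn : n ≠ 0) : abelP z n 0 = 0 := by
  cases n with
  | zero => exact absurd rfl hn
  | succ m => simp [abelP_succ]

lemma abelP_hasDerivAt (z : ℝ) (n : ℕ) (x : ℝ) :
    HasDerivAt (abelP z (n+1)) ((n+1) * abelP z n (x+z)) x := by
  have h : HasDerivAt (fun x : ℝ => x * (x + (n+1) * z) ^ n)
      (1 * (x + (n+1)*z)^n + x * ((n : ℝ) * (x + (n+1)*z) ^ (n-1) * 1)) x :=
    (hasDerivAt_id x).mul (((hasDerivAt_id x).add_const _).pow n)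
  have he : (fun x : ℝ => x * (x + (n+1) * z) ^ n) = abelP z (n+1) := by
    funext t; rw [abelP_succ]
  rw [he] at h
  convert h using 1
  cases n with
  | zero => simp [abelP_zero]
  | succ m =>
    rw [abelP_succ]
    have : ((m:ℕ)+1+1 : ℝ) * z = (m+2) * z := by push_cast; ring
    have hb : x + z + ((m:ℝ)+1) * z = x + ((m:ℕ)+1+1 : ℝ) * z := by push_cast; ring
    push_cast
    rw [show x + z + ((m:ℝ)+1) * z = x + ((m:ℝ)+1+1) * z from by ring, pow_succ]
    ring

lemma abelP_differentiable (z : ℝ) (n : ℕ) : Differentiable ℝ (abelP z n) := by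
  cases n with
  | zero =>
    have : abelP z 0 = fun _ : ℝ => (1:ℝ) := rfl
    rw [this]; exact differentiable_const 1
  | succ m => exact fun x => (abelP_hasDerivAt z m x).differentiableAt

lemma abel_binomial (z : ℝ) : ∀ (n : ℕ) (x y : ℝ),
    abelP z n (x + y) = ∑ k ∈ Finset.range (n+1),
      (n.choose k : ℝ) * abelP z k x * abelP z (n-k) y := by
  intro n
  induction n with
  | zero => intro x y; simp [abelP_zero]
  | succ n ih =>
    intro x y
    set f : ℝ → ℝ := fun x => abelP z (n+1) (x + y) with hf
    set g : ℝ → ℝ := fun x => ∑ k ∈ Finset.range (n+2),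
      ((n+1).choose k : ℝ) * abelP z k x * abelP z (n+1-k) y with hg
    have hfd : ∀ x, HasDerivAt f ((n+1) * abelP z n (x + y + z)) x := by
      intro x
      have := (abelP_hasDerivAt z n (x+y)).comp x ((hasDerivAt_id x).add_const y)
      simp only [mul_one, Function.comp_def, id] at this
      exact this
    have hgd : ∀ x, HasDerivAt g ((n+1) * abelP z n (x + y + z)) x := by
      intro x
      have h1 : HasDerivAt g (∑ k ∈ Finset.range (n+2),
          ((n+1).choose k : ℝ) * ((k : ℝ) * abelP z (k-1) (x+z)) * abelP z (n+1-k) y) x := by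
        apply HasDerivAt.fun_sum
        intro k hk
        cases k with
        | zero =>
          simpa [abelP_zero] using
            (hasDerivAt_const x (((n+1).choose 0 : ℝ) * 1 * abelP z (n+1-0) y))
        | succ m =>
          have h2 := HasDerivAt.const_mul (((n+1).choose (m+1) : ℝ))
            ((abelP_hasDerivAt z m x).mul_const (abelP z (n+1-(m+1)) y))
          have heq : (fun t => ((n+1).choose (m+1) : ℝ) * (abelP z (m+1) t * abelP z (n+1-(m+1)) y))
              = fun t => ((n+1).choose (m+1) : ℝ) * abelP z (m+1) t * abelP z (n+1-(m+1)) y := by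
            funext t; ring
          rw [heq] at h2
          refine h2.congr_deriv ?_
          simp only [Nat.add_sub_cancel, Nat.cast_add, Nat.cast_one]
          ring
      convert h1 using 1
      rw [Finset.sum_range_succ']
      simp only [Nat.cast_zero, zero_mul, mul_zero, zero_mul, add_zero, Nat.add_sub_cancel,
        Nat.cast_add, Nat.cast_one, Nat.reduceSubDiff]
      have hred : ∀ k, (((n+1).choose (k+1) : ℕ) : ℝ) * (((k:ℝ)+1) * abelP z k (x+z)) * abelP z (n-k) y
          = ((n:ℝ)+1) * ((n.choose k : ℝ) * abelP z k (x+z) * abelP z (n-k) y) := by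
        intro k
        have hc : ((n+1 : ℕ) : ℝ) * (n.choose k : ℝ) = ((n+1).choose (k+1) : ℝ) * ((k+1 : ℕ) : ℝ) := by
          exact_mod_cast congrArg (Nat.cast : ℕ → ℝ) (Nat.add_one_mul_choose_eq n k)
        push_cast at hc
        linear_combination (abelP z k (x+z) * abelP z (n-k) y) * hc.symm
      calc ((n:ℝ)+1) * abelP z n (x + y + z)
          = ((n:ℝ)+1) * abelP z n ((x + z) + y) := by ring_nf
        _ = ∑ k ∈ Finset.range (n+1),
            ((n:ℝ)+1) * ((n.choose k : ℝ) * abelP z k (x+z) * abelP z (n-k) y) := by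
            rw [ih (x+z) y, Finset.mul_sum]
        _ = _ := by
            refine Finset.sum_congr rfl fun k _ => ?_
            rw [← hred k]
    have hF : ∀ t, HasDerivAt (fun t => f t - g t) 0 t := by
      intro t; have h := (hfd t).sub (hgd t); simp only [sub_self] at h; exact h
    have hconst : f x - g x = f 0 - g 0 :=
      is_const_of_deriv_eq_zero (fun t => (hF t).differentiableAt)
        (fun t => (hF t).deriv) x 0
    have hg0 : g 0 = abelP z (n+1) y := by
      show ∑ k ∈ Finset.range (n+2), ((n+1).choose k : ℝ) * abelP z k 0 * abelP z (n+1-k) y = _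
      rw [Finset.sum_eq_single 0]
      · simp [abelP_zero]
      · intro k hk hk0
        rw [abelP_zero_left z k hk0]; ring
      · intro h; simp at h
    have hf0 : f 0 = abelP z (n+1) y := by rw [hf]; simp
    have : f x = g x := by linarith [hconst, hg0, hf0]
    simpa [hf, hg] using this

lemma gpPmf_eq (θ lam : ℝ) (hθ : 0 < θ) (hl : 0 ≤ lam) (k : ℕ) :
    gpPmf θ lam k = abelP lam k θ / (Nat.factorial k) * Real.exp (-θ - k * lam) := by
  cases k with
  | zero =>
    simp [gpPmf, abelP_zero, Real.rpow_neg_one, mul_inv_cancel₀ hθ.ne']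
  | succ n =>
    have h1 : ((n+1 : ℕ) : ℝ) - 1 = (n : ℝ) := by push_cast; ring
    rw [gpPmf, abelP_succ, h1, Real.rpow_natCast]
    push_cast
    ring

lemma gpPmf_nonneg (θ lam : ℝ) (hθ : 0 < θ) (hl : 0 ≤ lam) (k : ℕ) :
    0 ≤ gpPmf θ lam k := by
  unfold gpPmf
  apply mul_nonneg _ (Real.exp_pos _).le
  apply div_nonneg _ (Nat.cast_nonneg _)
  exact mul_nonneg hθ.le
    (Real.rpow_nonneg (add_nonneg hθ.le (mul_nonneg (Nat.cast_nonneg _) hl)) _)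

lemma gp_sum (θ1 θ2 lam : ℝ) (hθ1 : 0 < θ1) (hθ2 : 0 < θ2) (hl : 0 ≤ lam) (n : ℕ) :
    ∑ x ∈ Finset.range (n+1), gpPmf θ1 lam x * gpPmf θ2 lam (n-x)
      = gpPmf (θ1+θ2) lam n := by
  rw [gpPmf_eq _ _ (by linarith) hl, abel_binomial lam n θ1 θ2, Finset.sum_div,
    Finset.sum_mul]
  refine Finset.sum_congr rfl fun x hx => ?_
  have hxn : x ≤ n := Nat.lt_succ_iff.mp (Finset.mem_range.mp hx)
  rw [gpPmf_eq _ _ hθ1 hl, gpPmf_eq _ _ hθ2 hl]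
  have hcast : ((n - x : ℕ) : ℝ) = (n : ℝ) - (x : ℝ) := by
    rw [Nat.cast_sub hxn]
  have hexp : Real.exp (-θ1 - x * lam) * Real.exp (-θ2 - ((n-x:ℕ) : ℝ) * lam)
      = Real.exp (-(θ1+θ2) - n * lam) := by
    rw [← Real.exp_add, hcast]; ring_nf
  have hfac : (n.choose x : ℝ) * (x.factorial : ℝ) * ((n-x).factorial : ℝ)
      = (n.factorial : ℝ) := by
    exact_mod_cast congrArg (Nat.cast : ℕ → ℝ) (Nat.choose_mul_factorial_mul_factorial hxn)
  have hx0 : (x.factorial : ℝ) ≠ 0 := Nat.cast_ne_zero.mpr x.factorial_ne_zero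
  have hy0 : ((n-x).factorial : ℝ) ≠ 0 := Nat.cast_ne_zero.mpr (n-x).factorial_ne_zero
  have hn0 : (n.factorial : ℝ) ≠ 0 := Nat.cast_ne_zero.mpr n.factorial_ne_zero
  rw [mul_comm (abelP lam x θ1 / ↑x.factorial * Real.exp (-θ1 - ↑x * lam))]
  field_simp
  have hexp' : Real.exp (-θ2 + -θ1 - ↑n * lam)
      = Real.exp (-θ1 - ↑x*lam) * Real.exp (-θ2 - ((n:ℝ)-(x:ℝ))*lam) := by
    rw [← Real.exp_add]; congr 1; ring
  rw [hcast, show Real.exp (-(θ1 + θ2) - lam * ↑n) = Real.exp (-θ1 - ↑x*lam) * Real.exp (-θ2 - ((n:ℝ)-(x:ℝ))*lam) by rw [← Real.exp_add]; congr 1; ring, show Real.exp (-θ1 - lam * ↑x) = Real.exp (-θ1 - ↑x*lam) by ring_nf]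
  linear_combination (abelP lam x θ1 * abelP lam (n-x) θ2 * Real.exp (-θ1-(x:ℝ)*lam)
    * Real.exp (-θ2 - ((n:ℝ)-(x:ℝ))*lam)) * hfac.symm

/-- Convolution property: the sum of two independent generalized Poisson random variables
with parameters `(θ₁, λ)` and `(θ₂, λ)` follows a generalized Poisson distribution with
parameters `(θ₁ + θ₂, λ)`. -/

theorem gp_convolution {Ω : Type*} [MeasurableSpace Ω] (P : Measure Ω) [IsProbabilityMeasure P]
    (X Y : Ω → ℕ) (θ1 θ2 lam : ℝ) (hθ1 : 0 < θ1) (hθ2 : 0 < θ2)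
    (hlam0 : 0 ≤ lam) (hlam1 : lam < 1)
    (hXm : Measurable X) (hYm : Measurable Y)
    (hX : HasGP P X θ1 lam) (hY : HasGP P Y θ2 lam)
    (hindep : IndepFun X Y P) :
    HasGP P (fun ω => X ω + Y ω) (θ1 + θ2) lam := by
  intro n
  have hset : {ω | (fun ω => X ω + Y ω) ω = n}
      = ⋃ x ∈ Finset.range (n+1), (X ⁻¹' {x} ∩ Y ⁻¹' {n - x}) := by
    ext ω
    simp only [Set.mem_setOf_eq, Set.mem_iUnion, Set.mem_inter_iff, Set.mem_preimage,
      Set.mem_singleton_iff, Finset.mem_range]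
    constructor
    · intro h; exact ⟨X ω, by omega, rfl, by omega⟩
    · rintro ⟨x, hx, h1, h2⟩; omega
  have hdisj : (↑(Finset.range (n+1)) : Set ℕ).PairwiseDisjoint
      (fun x => X ⁻¹' {x} ∩ Y ⁻¹' {n - x}) := by
    intro i _ j _ hij
    refine Set.disjoint_left.mpr ?_
    rintro ω ⟨h1, _⟩ ⟨h3, _⟩
    exact hij (h1.symm.trans h3)
  rw [hset, measure_biUnion_finset hdisj
    (fun x _ => (hXm (measurableSet_singleton x)).inter (hYm (measurableSet_singleton (n-x))))]
  have hterm : ∀ x ∈ Finset.range (n+1),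
      P (X ⁻¹' {x} ∩ Y ⁻¹' {n - x})
        = ENNReal.ofReal (gpPmf θ1 lam x * gpPmf θ2 lam (n-x)) := by
    intro x _
    rw [hindep.measure_inter_preimage_eq_mul _ _ (measurableSet_singleton x)
      (measurableSet_singleton (n-x))]
    have e1 : X ⁻¹' {x} = {ω | X ω = x} := rfl
    have e2 : Y ⁻¹' {n-x} = {ω | Y ω = n-x} := rfl
    rw [e1, e2, hX x, hY (n-x), ← ENNReal.ofReal_mul (gpPmf_nonneg θ1 lam hθ1 hlam0 x)]
  rw [Finset.sum_congr rfl hterm,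
    ← ENNReal.ofReal_sum_of_nonneg (fun x _ =>
      mul_nonneg (gpPmf_nonneg θ1 lam hθ1 hlam0 x) (gpPmf_nonneg θ2 lam hθ2 hlam0 (n-x))),
    gp_sum θ1 θ2 lam hθ1 hθ2 hlam0 n]
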